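/- For every K > 2 and every n ≥ K, there exists a BN on n nodes in which the local function of every node is a nested canalyzing function over K pairwise distinct input variables, and which is observable with an observation set of size ⌈n / K⌉. -/

import Mathlib

/-- `F` is observable with observation set `S` if the map from an initial state to its
output sequence (the restriction of each iterate to `S`) is injective. -/
def observable {n : ℕ} (F : (Fin n → Bool) → (Fin n → Bool)) (S : Finset (Fin n)) : Prop :=
  Function.Injective (fun (x : Fin n → Bool) => fun (t : ℕ) (i : S) => (F^[t] x) i.val)

/-- Nested canalyzing functions over the variable set `V`, generated inductively:
a literal is nested canalyzing, and `ℓ ∨ g`, `ℓ ∧ g` are nested canalyzing whenever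
`ℓ` is a literal in a variable not used by the nested canalyzing function `g`. -/
inductive NestedCanalyzing {n : ℕ} : ((Fin n → Bool) → Bool) → Finset (Fin n) → Prop
  | lit (i : Fin n) (b : Bool) : NestedCanalyzing (fun x => Bool.xor (x i) b) {i}
  | or (i : Fin n) (b : Bool) {g : (Fin n → Bool) → Bool} {V : Finset (Fin n)}
      (hi : i ∉ V) (hg : NestedCanalyzing g V) :
      NestedCanalyzing (fun x => (Bool.xor (x i) b) || g x) (insert i V)
  | and (i : Fin n) (b : Bool) {g : (Fin n → Bool) → Bool} {V : Finset (Fin n)}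
      (hi : i ∉ V) (hg : NestedCanalyzing g V) :
      NestedCanalyzing (fun x => (Bool.xor (x i) b) && g x) (insert i V)

/-- helper: a natural number as an element of `Fin n`, via mod. -/
def mkFin (n : ℕ) (h : 0 < n) (v : ℕ) : Fin n := ⟨v % n, Nat.mod_lt _ h⟩

/-- length of block `j` -/
def Lblk (K n j : ℕ) : ℕ := min K (n - j*K)

/-- the `i`-th node of block `j` (cyclically within the block) -/
def nodef (K n : ℕ) (h : 0 < n) (j i : ℕ) : Fin n := mkFin n h (j*K + i % Lblk K n j)

def blockF (K n j : ℕ) : Finset (Fin n) :=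
  (Finset.Ico (j*K) (min (j*K+K) n)).attachFin (fun a ha => by
    simp only [Finset.mem_Ico] at ha; omega)

def CFf (K n j : ℕ) : Finset (Fin n) :=
  (Finset.range (min (K - Lblk K n j) n)).attachFin (fun a ha => by
    simp only [Finset.mem_range] at ha; omega)

def Wf (K n j : ℕ) : Finset (Fin n) := blockF K n j ∪ CFf K n j

def nxtf (K n : ℕ) (h : 0 < n) (v : Fin n) : Fin n :=
  nodef K n h (v.val / K) (v.val % K + 1)

def FF (K n : ℕ) (h : 0 < n) (x : Fin n → Bool) (v : Fin n) : Bool :=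
  x (nxtf K n h v) &&
    !(decide (∀ u ∈ (Wf K n (v.val / K)).erase (nxtf K n h v), x u = true))

lemma nc_notall {n : ℕ} (U : Finset (Fin n)) (h : U.Nonempty) :
    NestedCanalyzing (fun x => !(decide (∀ u ∈ U, x u = true))) U := by
  induction h using Finset.Nonempty.cons_induction with
  | singleton a =>
      have h1 := NestedCanalyzing.lit a true
      have he : (fun (x : Fin n → Bool) => Bool.xor (x a) true)
          = (fun x => !(decide (∀ u ∈ ({a} : Finset (Fin n)), x u = true))) := by
        funext x; simp [Bool.xor_true]
      rwa [he] at h1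
  | cons a s ha hs ih =>
      have h1 := NestedCanalyzing.or a true ha ih
      have he : (fun (x : Fin n → Bool) =>
            (Bool.xor (x a) true) || !(decide (∀ u ∈ s, x u = true)))
          = (fun x => !(decide (∀ u ∈ insert a s, x u = true))) := by
        funext x
        simp [Finset.mem_insert, Bool.xor_true]
      rw [Finset.cons_eq_insert, ← he]
      exact h1

lemma mem_blockF {K n j : ℕ} {u : Fin n} :
    u ∈ blockF K n j ↔ j*K ≤ u.val ∧ u.val < min (j*K+K) n := by
  simp [blockF, Finset.mem_attachFin, Finset.mem_Ico]

lemma mem_CFf {K n j : ℕ} {u : Fin n} :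
    u ∈ CFf K n j ↔ u.val < min (K - Lblk K n j) n := by
  simp [CFf, Finset.mem_attachFin, Finset.mem_range]

lemma node_val {K n : ℕ} (h0 : 0 < n) {j : ℕ} (i : ℕ) (hj : j*K < n) (hK : 0 < K) :
    (nodef K n h0 j i).val = j*K + i % Lblk K n j := by
  have hL : 0 < Lblk K n j := by unfold Lblk; omega
  have h2 : i % Lblk K n j < Lblk K n j := Nat.mod_lt _ hL
  have h3 : Lblk K n j ≤ n - j*K := min_le_right _ _
  simp only [nodef, mkFin]
  exact Nat.mod_eq_of_lt (by omega)

lemma card_Wf {K n j : ℕ} (hn : K ≤ n) (hj : j*K < n) (hK : 0 < K) : (Wf K n j).card = K := by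
  have hd : Disjoint (blockF K n j) (CFf K n j) := by
    rw [Finset.disjoint_left]
    intro u h1 h2
    rw [mem_blockF] at h1; rw [mem_CFf] at h2
    rcases Nat.eq_zero_or_pos j with hj0 | hj0
    · subst hj0; unfold Lblk at h2; simp at h2; omega
    · have : K ≤ j*K := Nat.le_mul_of_pos_left K hj0
      unfold Lblk at h2; omega
  rw [Wf, Finset.card_union_of_disjoint hd]
  rw [blockF, CFf, Finset.card_attachFin, Finset.card_attachFin, Nat.card_Ico, Finset.card_range]
  unfold Lblk; omega

lemma node_mem_blockF {K n : ℕ} (h0 : 0 < n) {j : ℕ} (i : ℕ) (hj : j*K < n) (hK : 0 < K) :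
    nodef K n h0 j i ∈ blockF K n j := by
  rw [mem_blockF, node_val h0 i hj hK]
  have hL : 0 < Lblk K n j := by unfold Lblk; omega
  have h2 : i % Lblk K n j < Lblk K n j := Nat.mod_lt _ hL
  unfold Lblk at *; omega

lemma nc_main {K n : ℕ} (hK : 2 < K) (hn : K ≤ n) (h0 : 0 < n) (v : Fin n) :
    NestedCanalyzing (fun x => FF K n h0 x v) (Wf K n (v.val / K)) := by
  set j := v.val / K with hjd
  have hjle : j*K ≤ v.val := Nat.div_mul_le_self _ _
  have hj : j*K < n := lt_of_le_of_lt hjle v.isLt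
  have hmem : nxtf K n h0 v ∈ Wf K n j :=
    Finset.mem_union_left _ (node_mem_blockF h0 _ hj (by omega))
  have hcard : (Wf K n j).card = K := card_Wf hn hj (by omega)
  have hU : ((Wf K n j).erase (nxtf K n h0 v)).Nonempty := by
    rw [← Finset.card_pos, Finset.card_erase_of_mem hmem, hcard]; omega
  have h1 := NestedCanalyzing.and (nxtf K n h0 v) false
      (Finset.notMem_erase _ _) (nc_notall _ hU)
  rw [Finset.insert_erase hmem] at h1
  have he : (fun (x : Fin n → Bool) => (Bool.xor (x (nxtf K n h0 v)) false) &&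
      !(decide (∀ u ∈ (Wf K n j).erase (nxtf K n h0 v), x u = true)))
      = (fun x => FF K n h0 x v) := by
    funext x; simp [FF, Bool.xor_false, hjd]
  rwa [he] at h1

section Core

variable (L : ℕ) (γ : ℕ → Bool)

lemma rotform (hL : 0 < L) (X : ℕ → ℕ → Bool)
    (hXp : ∀ t i, X t i = X t (i % L))
    (hX : ∀ t i, X (t+1) i =
      if (γ t = true ∧ ∀ i' < L, X t i' = true) then false else X t (i+1))
    (i0 : ℕ) (hi0 : i0 < L) (hf : X 0 i0 = false) :
    ∀ t i, X t i = X 0 (i + t) := by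
  intro t
  induction t with
  | zero => intro i; rfl
  | succ t ih =>
    intro i
    have hcond : ¬ (γ t = true ∧ ∀ i' < L, X t i' = true) := by
      rintro ⟨-, hall⟩
      have htl : t % L < L := Nat.mod_lt _ hL
      set w := (i0 + (L - t % L)) % L with hw
      have hwL : w < L := Nat.mod_lt _ hL
      have h2 : (w + t) % L = i0 := by
        have ht := Nat.div_add_mod t L
        rw [hw, Nat.mod_add_mod]
        have expand : L*(1 + t/L) = L + L*(t/L) := by
          rw [Nat.mul_add, Nat.mul_one]
        have he : i0 + (L - t % L) + t = i0 + L * (1 + t / L) := by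
          rw [expand]; omega
        rw [he, Nat.add_mul_mod_self_left, Nat.mod_eq_of_lt hi0]
      have h3 : X t w = false := by
        rw [ih w, hXp 0 (w + t), h2]; exact hf
      have h4 := hall w hwL
      rw [h4] at h3; cases h3
    rw [hX t i, if_neg hcond, ih (i+1)]
    congr 1; omega

lemma mixed_contra (hL : 0 < L) (X Y : ℕ → ℕ → Bool)
    (hXp : ∀ t i, X t i = X t (i % L)) (hYp : ∀ t i, Y t i = Y t (i % L))
    (hX : ∀ t i, X (t+1) i =
      if (γ t = true ∧ ∀ i' < L, X t i' = true) then false else X t (i+1))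
    (hY : ∀ t i, Y (t+1) i =
      if (γ t = true ∧ ∀ i' < L, Y t i' = true) then false else Y t (i+1))
    (hobs : ∀ t, X t 0 = Y t 0)
    (hallX : ∀ i' < L, X 0 i' = true)
    (i1 : ℕ) (hi1 : i1 < L) (hY1 : Y 0 i1 = false) : False := by
  have hrotY := rotform L γ hL Y hYp hY i1 hi1 hY1
  by_cases hγ : ∃ τ, γ τ = true
  · classical
    set τ := Nat.find hγ with hτdef
    have hτ : γ τ = true := Nat.find_spec hγ
    have hpre : ∀ s, s < τ → γ s = false := by
      intro s hs
      have := Nat.find_min hγ hs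
      simpa using this
    have hXall : ∀ t, t ≤ τ → ∀ i, X t i = true := by
      intro t
      induction t with
      | zero => intro _ i; rw [hXp 0 i]; exact hallX _ (Nat.mod_lt _ hL)
      | succ t ih =>
        intro ht i
        rw [hX t i, if_neg]
        · exact ih (by omega) (i+1)
        · rintro ⟨hg, -⟩
          rw [hpre t (by omega)] at hg; cases hg
    have hXzero : ∀ d i, X (τ + 1 + d) i = false := by
      intro d
      induction d with
      | zero =>
        intro i
        rw [hX τ i, if_pos ⟨hτ, fun i' _ => hXall τ le_rfl i'⟩]
      | succ d ih =>
        intro i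
        have he : τ + 1 + (d+1) = (τ+1+d) + 1 := by omega
        rw [he, hX (τ+1+d) i]
        split
        · rfl
        · exact ih (i+1)
    have hD : τ + 1 ≤ (τ+1)*L := Nat.le_mul_of_pos_right _ hL
    have e2 : X ((τ+1)*L) 0 = false := by
      have he : (τ+1)*L = τ + 1 + ((τ+1)*L - (τ+1)) := by omega
      rw [he]; exact hXzero _ 0
    have e3 : Y ((τ+1)*L) 0 = true := by
      rw [hrotY ((τ+1)*L) 0, Nat.zero_add, hYp 0, Nat.mul_mod_left, ← hobs 0]
      exact hallX 0 hL
    rw [hobs ((τ+1)*L), e3] at e2; cases e2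
  · push_neg at hγ
    have hγf : ∀ τ, γ τ = false := by
      intro τ; have := hγ τ; simpa using this
    have hXall : ∀ t, ∀ i, X t i = true := by
      intro t
      induction t with
      | zero => intro i; rw [hXp 0 i]; exact hallX _ (Nat.mod_lt _ hL)
      | succ t ih =>
        intro i
        rw [hX t i, if_neg]
        · exact ih (i+1)
        · rintro ⟨hg, -⟩
          rw [hγf t] at hg; cases hg
    have e1 : Y i1 0 = false := by
      rw [hrotY i1 0, Nat.zero_add]; exact hY1
    have e2 := hobs i1
    rw [hXall i1 0, e1] at e2; cases e2

lemma core (hL : 0 < L) (X Y : ℕ → ℕ → Bool)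
    (hXp : ∀ t i, X t i = X t (i % L)) (hYp : ∀ t i, Y t i = Y t (i % L))
    (hX : ∀ t i, X (t+1) i =
      if (γ t = true ∧ ∀ i' < L, X t i' = true) then false else X t (i+1))
    (hY : ∀ t i, Y (t+1) i =
      if (γ t = true ∧ ∀ i' < L, Y t i' = true) then false else Y t (i+1))
    (hobs : ∀ t, X t 0 = Y t 0) :
    ∀ i, X 0 i = Y 0 i := by
  by_cases hx : ∀ i' < L, X 0 i' = true
  · by_cases hy : ∀ i' < L, Y 0 i' = true
    · intro i
      rw [hXp 0 i, hYp 0 i, hx _ (Nat.mod_lt _ hL), hy _ (Nat.mod_lt _ hL)]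
    · push_neg at hy
      obtain ⟨i1, hi1, h1⟩ := hy
      exact absurd (mixed_contra L γ hL X Y hXp hYp hX hY hobs hx i1 hi1
        (by simpa using h1)) (by simp)
  · push_neg at hx
    obtain ⟨i0, hi0, h0⟩ := hx
    by_cases hy : ∀ i' < L, Y 0 i' = true
    · exact absurd (mixed_contra L γ hL Y X hYp hXp hY hX (fun t => (hobs t).symm)
        hy i0 hi0 (by simpa using h0)) (by simp)
    · push_neg at hy
      obtain ⟨i1, hi1, h1⟩ := hy
      have hrX := rotform L γ hL X hXp hX i0 hi0 (by simpa using h0)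
      have hrY := rotform L γ hL Y hYp hY i1 hi1 (by simpa using h1)
      intro i
      rw [hXp 0 i, hYp 0 i]
      have e1 : X (i % L) 0 = X 0 (i % L) := by rw [hrX (i % L) 0, Nat.zero_add]
      have e2 : Y (i % L) 0 = Y 0 (i % L) := by rw [hrY (i % L) 0, Nat.zero_add]
      rw [← e1, ← e2]
      exact hobs _

end Core

lemma recur {K n : ℕ} (hK : 2 < K) (hn : K ≤ n) (h0 : 0 < n) {j : ℕ} (hj : j*K < n)
    (z : Fin n → Bool) (i : ℕ) :
    FF K n h0 z (nodef K n h0 j i)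
      = if ((decide (∀ u ∈ CFf K n j, z u = true)) = true
            ∧ ∀ i' < Lblk K n j, z (nodef K n h0 j i') = true)
        then false else z (nodef K n h0 j (i+1)) := by
  have hK0 : 0 < K := by omega
  have hL : 0 < Lblk K n j := by unfold Lblk; omega
  have hLK : Lblk K n j ≤ K := min_le_left _ _
  have hLn : j*K + Lblk K n j ≤ n := by
    have := min_le_right K (n - j*K); unfold Lblk; omega
  have himod : i % Lblk K n j < Lblk K n j := Nat.mod_lt _ hL
  have hval : (nodef K n h0 j i).val = j*K + i % Lblk K n j := node_val h0 i hj hK0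
  have hdiv : (nodef K n h0 j i).val / K = j := by
    rw [hval, Nat.add_comm, Nat.add_mul_div_right _ _ hK0,
      Nat.div_eq_of_lt (lt_of_lt_of_le himod hLK), Nat.zero_add]
  have hmod : (nodef K n h0 j i).val % K = i % Lblk K n j := by
    rw [hval, Nat.add_comm, Nat.add_mul_mod_self_right,
      Nat.mod_eq_of_lt (lt_of_lt_of_le himod hLK)]
  have hmm : (i % Lblk K n j + 1) % Lblk K n j = (i + 1) % Lblk K n j :=
    Nat.ModEq.add_right 1 (Nat.mod_modEq i _)
  have hnxt : nxtf K n h0 (nodef K n h0 j i) = nodef K n h0 j (i+1) := by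
    unfold nxtf
    rw [hdiv, hmod]
    simp only [nodef]
    rw [hmm]
  have hBL : (∀ u ∈ blockF K n j, z u = true)
      ↔ (∀ i' < Lblk K n j, z (nodef K n h0 j i') = true) := by
    constructor
    · intro h i' hi'
      exact h _ (node_mem_blockF h0 i' hj hK0)
    · intro h u hu
      rw [mem_blockF] at hu
      have h1 : u = nodef K n h0 j (u.val - j*K) := by
        apply Fin.ext
        rw [node_val h0 _ hj hK0, Nat.mod_eq_of_lt (by unfold Lblk at *; omega)]
        omega
      rw [h1]
      exact h _ (by unfold Lblk at *; omega)
  have hWsplit : (∀ u ∈ Wf K n j, z u = true) ↔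
      ((∀ u ∈ blockF K n j, z u = true) ∧ (∀ u ∈ CFf K n j, z u = true)) := by
    unfold Wf
    exact Finset.forall_mem_union
  have hnm : nodef K n h0 j (i+1) ∈ Wf K n j :=
    Finset.mem_union_left _ (node_mem_blockF h0 _ hj hK0)
  by_cases hall : ∀ u ∈ Wf K n j, z u = true
  · rw [if_pos]
    · unfold FF
      rw [hdiv, hnxt, hall _ hnm]
      have hthis : (∀ u ∈ (Wf K n j).erase (nodef K n h0 j (i+1)), z u = true) :=
        fun u hu => hall u (Finset.mem_of_mem_erase hu)
      rw [decide_eq_true hthis]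
      simp
    · rw [hWsplit] at hall
      exact ⟨decide_eq_true hall.2, hBL.mp hall.1⟩
  · rw [if_neg]
    swap
    · rintro ⟨h1, h2⟩
      exact hall (hWsplit.mpr ⟨hBL.mpr h2, of_decide_eq_true h1⟩)
    · unfold FF
      rw [hdiv, hnxt]
      by_cases her : ∀ u ∈ (Wf K n j).erase (nodef K n h0 j (i+1)), z u = true
      · have hz : z (nodef K n h0 j (i+1)) = false := by
          by_contra hzz
          apply hall
          intro u hu
          by_cases hue : u = nodef K n h0 j (i+1)
          · subst hue; simpa using hzz
          · exact her u (Finset.mem_erase.mpr ⟨hue, hu⟩)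
        rw [hz]; simp
      · rw [decide_eq_false her]; simp

lemma node_mod {K n : ℕ} (h0 : 0 < n) (j i : ℕ) :
    nodef K n h0 j i = nodef K n h0 j (i % Lblk K n j) := by
  simp only [nodef]
  rw [Nat.mod_mod_of_dvd _ dvd_rfl]

theorem K_nc_best_case (K n : ℕ) (hK : 2 < K) (hn : K ≤ n) :
    ∃ F : (Fin n → Bool) → (Fin n → Bool),
      (∀ i : Fin n, ∃ V : Finset (Fin n), V.card = K ∧
        NestedCanalyzing (fun x => F x i) V) ∧
      ∃ S : Finset (Fin n), S.card = (n + K - 1) / K ∧ observable F S := by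
  have h0 : 0 < n := by omega
  have hK0 : 0 < K := by omega
  set m := (n + K - 1) / K with hmd
  have hdm := Nat.div_add_mod (n + K - 1) K
  have hrlt : (n + K - 1) % K < K := Nat.mod_lt _ hK0
  rw [← hmd] at hdm
  have hm1 : 0 < m := Nat.div_pos (by omega) hK0
  have hub : n ≤ K*m ∧ K*m ≤ n + K - 1 := by omega
  have hjlt : ∀ j, j < m → j*K < n := by
    intro j hjm
    have h1 : j+1 ≤ m := hjm
    have h2 : (j+1)*K ≤ m*K := Nat.mul_le_mul_right _ h1
    have h3 : m*K = K*m := Nat.mul_comm _ _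
    have h4 : (j+1)*K = j*K + K := by rw [Nat.add_mul, Nat.one_mul]
    omega
  have hSin : ∀ j : Fin m, (j.val * K) < n := fun j => hjlt _ j.isLt
  refine ⟨FF K n h0, ?_, ?_⟩
  · intro v
    have hj : (v.val / K) * K < n := lt_of_le_of_lt (Nat.div_mul_le_self _ _) v.isLt
    exact ⟨Wf K n (v.val / K), card_Wf hn hj hK0, nc_main hK hn h0 v⟩
  · refine ⟨Finset.image (fun j : Fin m => mkFin n h0 (j.val * K)) Finset.univ, ?_, ?_⟩
    · have hinj : Function.Injective (fun j : Fin m => mkFin n h0 (j.val * K)) := by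
        intro a b hab
        have ha := hSin a
        have hb := hSin b
        simp only [mkFin, Fin.mk.injEq] at hab
        rw [Nat.mod_eq_of_lt ha, Nat.mod_eq_of_lt hb] at hab
        exact Fin.ext (Nat.eq_of_mul_eq_mul_right hK0 hab)
      rw [Finset.card_image_of_injective _ hinj, Finset.card_univ, Fintype.card_fin]
    · intro x y hxy
      have hobs : ∀ (t : ℕ) (s : Fin n),
          s ∈ Finset.image (fun j : Fin m => mkFin n h0 (j.val * K)) Finset.univ →
          ((FF K n h0)^[t] x) s = ((FF K n h0)^[t] y) s := by
        intro t s hs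
        exact congrFun (congrFun hxy t) ⟨s, hs⟩
      have htap : ∀ j, j < m →
          nodef K n h0 j 0 ∈ Finset.image (fun j : Fin m => mkFin n h0 (j.val * K)) Finset.univ := by
        intro j hjm
        rw [Finset.mem_image]
        refine ⟨⟨j, hjm⟩, Finset.mem_univ _, ?_⟩
        simp only [nodef, Nat.zero_mod, Nat.add_zero]
      have blkeq : ∀ j, j < m →
          (∀ t, ∀ u ∈ CFf K n j, ((FF K n h0)^[t] x) u = ((FF K n h0)^[t] y) u) →
          ∀ i, x (nodef K n h0 j i) = y (nodef K n h0 j i) := by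
        intro j hjm hCF
        have hj : j*K < n := hjlt j hjm
        have hL : 0 < Lblk K n j := by unfold Lblk; omega
        have hper : ∀ (w : Fin n → Bool) (t i : ℕ),
            ((FF K n h0)^[t] w) (nodef K n h0 j i)
              = ((FF K n h0)^[t] w) (nodef K n h0 j (i % Lblk K n j)) := by
          intro w t i; rw [← node_mod]
        have hXr : ∀ t i, ((FF K n h0)^[t+1] x) (nodef K n h0 j i) =
            if ((decide (∀ u ∈ CFf K n j, ((FF K n h0)^[t] x) u = true)) = true
              ∧ ∀ i' < Lblk K n j, ((FF K n h0)^[t] x) (nodef K n h0 j i') = true)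
            then false else ((FF K n h0)^[t] x) (nodef K n h0 j (i+1)) := by
          intro t i
          rw [Function.iterate_succ_apply']
          exact recur hK hn h0 hj _ i
        have hYr : ∀ t i, ((FF K n h0)^[t+1] y) (nodef K n h0 j i) =
            if ((decide (∀ u ∈ CFf K n j, ((FF K n h0)^[t] x) u = true)) = true
              ∧ ∀ i' < Lblk K n j, ((FF K n h0)^[t] y) (nodef K n h0 j i') = true)
            then false else ((FF K n h0)^[t] y) (nodef K n h0 j (i+1)) := by
          intro t i
          rw [Function.iterate_succ_apply']
          have hdx : decide (∀ u ∈ CFf K n j, ((FF K n h0)^[t] x) u = true)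
              = decide (∀ u ∈ CFf K n j, ((FF K n h0)^[t] y) u = true) := by
            apply decide_eq_decide.mpr
            constructor
            · intro h u hu; rw [← hCF t u hu]; exact h u hu
            · intro h u hu; rw [hCF t u hu]; exact h u hu
          rw [hdx]
          exact recur hK hn h0 hj _ i
        exact core (Lblk K n j)
          (fun t => decide (∀ u ∈ CFf K n j, ((FF K n h0)^[t] x) u = true)) hL
          (fun t i => ((FF K n h0)^[t] x) (nodef K n h0 j i))
          (fun t i => ((FF K n h0)^[t] y) (nodef K n h0 j i))
          (hper x) (hper y) hXr hYr
          (fun t => hobs t _ (htap j hjm))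
      have hCF0 : ∀ u : Fin n, u ∈ CFf K n 0 → False := by
        intro u hu
        rw [mem_CFf] at hu
        unfold Lblk at hu
        omega
      have hx0 : ∀ i, x (nodef K n h0 0 i) = y (nodef K n h0 0 i) :=
        blkeq 0 hm1 (fun t u hu => (hCF0 u hu).elim)
      have htraj0 : ∀ t i, ((FF K n h0)^[t] x) (nodef K n h0 0 i)
          = ((FF K n h0)^[t] y) (nodef K n h0 0 i) := by
        intro t
        induction t with
        | zero => exact hx0
        | succ t ih =>
          intro i
          have hj0 : 0*K < n := by omega
          have e1 := recur hK hn h0 (j := 0) hj0 ((FF K n h0)^[t] x) i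
          have e2 := recur hK hn h0 (j := 0) hj0 ((FF K n h0)^[t] y) i
          rw [Function.iterate_succ_apply', Function.iterate_succ_apply', e1, e2]
          have hcx : (∀ u ∈ CFf K n 0, ((FF K n h0)^[t] x) u = true) :=
            fun u hu => (hCF0 u hu).elim
          have hcy : (∀ u ∈ CFf K n 0, ((FF K n h0)^[t] y) u = true) :=
            fun u hu => (hCF0 u hu).elim
          by_cases hbx : ∀ i' < Lblk K n 0, ((FF K n h0)^[t] x) (nodef K n h0 0 i') = true
          · rw [if_pos ⟨decide_eq_true hcx, hbx⟩,
              if_pos ⟨decide_eq_true hcy, fun i' hi' => by rw [← ih i']; exact hbx i' hi'⟩]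
          · rw [if_neg, if_neg]
            · exact ih (i+1)
            · rintro ⟨-, hby⟩; exact hbx (fun i' hi' => by rw [ih i']; exact hby i' hi')
            · rintro ⟨-, hbx'⟩; exact hbx hbx'
      funext v
      have hcomm : (v.val/K)*K = K*(v.val/K) := Nat.mul_comm _ _
      have hjv2 : (v.val / K)*K < n := lt_of_le_of_lt (Nat.div_mul_le_self _ _) v.isLt
      have hjv : v.val / K < m := by
        by_contra hc
        push_neg at hc
        have h2 : m * K ≤ (v.val / K) * K := Nat.mul_le_mul_right _ hc
        have h3 := Nat.div_mul_le_self v.val K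
        have h4 : m*K = K*m := Nat.mul_comm _ _
        have h5 := v.isLt
        omega
      have hCFv : ∀ t, ∀ u ∈ CFf K n (v.val / K),
          ((FF K n h0)^[t] x) u = ((FF K n h0)^[t] y) u := by
        intro t u hu
        rw [mem_CFf] at hu
        have hLle : Lblk K n (v.val/K) ≤ K := min_le_left _ _
        have huK : u.val < K := by omega
        have hueq : u = nodef K n h0 0 u.val := by
          apply Fin.ext
          rw [node_val h0 _ (by omega : 0*K < n) hK0]
          have hL0 : Lblk K n 0 = K := by unfold Lblk; omega
          rw [hL0, Nat.mod_eq_of_lt huK]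
          omega
        rw [hueq]
        exact htraj0 t u.val
      have hfin := blkeq (v.val / K) hjv hCFv (v.val % K)
      have hvnode : nodef K n h0 (v.val / K) (v.val % K) = v := by
        apply Fin.ext
        rw [node_val h0 _ hjv2 hK0]
        have hdm2 := Nat.div_add_mod v.val K
        have hmK : v.val % K < K := Nat.mod_lt _ hK0
        have hmL : v.val % K < Lblk K n (v.val/K) := by
          have h5 := v.isLt
          unfold Lblk
          omega
        rw [Nat.mod_eq_of_lt hmL]
        omega
      rw [hvnode] at hfin
      exact hfin
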